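/- Let (V,μ,ν) be a weighted graph in which every node has only finitely many neighbours, and let p ≥ 3 be an odd integer. Let u : [0,∞) × V → ℝ be such that for every v ∈ V the function t ↦ u(t,v) is differentiable on [0,∞) (one-sidedly at 0) and satisfies ∂_t u(t,v) = −L_p u(t,v) for all t ≥ 0. Then for every v ∈ V the function t ↦ u(t,v) is (p−1)-times continuously differentiable on [0,∞), and its (p−1)-st derivative is Lipschitz continuous on every compact subinterval of [0,∞). -/

import Mathlib

/-- The discrete `p`-Laplacian on a weighted graph (pointwise, via a `tsum`). -/
noncomputable def pLap {V : Type*} (μ : V → V → ℝ) (ν : V → ℝ) (p : ℝ)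
    (f : V → ℝ) (v : V) : ℝ :=
  (1 / ν v) * ∑' w, μ v w * |f v - f w| ^ (p - 2) * (f v - f w)

namespace Stmt7Aux

open Set

/-- Lipschitz on every compact subinterval of `s`. -/
def LipOn (s : Set ℝ) (h : ℝ → ℝ) : Prop :=
  ∀ a b : ℝ, ∃ K : ℝ, 0 ≤ K ∧ ∀ x ∈ Set.Icc a b ∩ s, ∀ y ∈ Set.Icc a b ∩ s,
    |h x - h y| ≤ K * |x - y|

/-- `C^n` on `s` with `n`-th derivative Lipschitz on compact subintervals. -/
def DD (s : Set ℝ) (n : ℕ) (f : ℝ → ℝ) : Prop :=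
  ContDiffOn ℝ n f s ∧ LipOn s (iteratedDerivWithin n f s)

lemma LipOn.congr {s : Set ℝ} {h h' : ℝ → ℝ} (hfg : Set.EqOn h h' s)
    (hh : LipOn s h) : LipOn s h' := by
  intro a b
  obtain ⟨K, hK0, hK⟩ := hh a b
  exact ⟨K, hK0, fun x hx y hy => by
    rw [← hfg hx.2, ← hfg hy.2]; exact hK x hx y hy⟩

lemma lipOn_iteratedDerivWithin {s : Set ℝ} (hs : UniqueDiffOn ℝ s) (hcs : IsClosed s)
    (hconv : Convex ℝ s) {n : ℕ} {f : ℝ → ℝ} (hf : ContDiffOn ℝ (n + 1) f s) :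
    LipOn s (iteratedDerivWithin n f s) := by
  intro a b
  set t := Set.Icc a b ∩ s with ht
  have htc : IsCompact t := isCompact_Icc.inter_right hcs
  have hts : t ⊆ s := Set.inter_subset_right
  have hcont : ContinuousOn (iteratedDerivWithin (n + 1) f s) t :=
    (hf.continuousOn_iteratedDerivWithin le_rfl hs).mono hts
  obtain ⟨M, hM⟩ := htc.exists_bound_of_continuousOn hcont
  refine ⟨max M 0, le_max_right _ _, fun x hx y hy => ?_⟩
  have hder : ∀ z ∈ t, HasDerivWithinAt (iteratedDerivWithin n f s)
      (iteratedDerivWithin (n + 1) f s z) t z := by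
    intro z hz
    have h1 : DifferentiableWithinAt ℝ (iteratedDerivWithin n f s) s z :=
      hf.differentiableOn_iteratedDerivWithin (by exact_mod_cast Nat.lt_succ_self n) hs z (hts hz)
    have h2 : HasDerivWithinAt (iteratedDerivWithin n f s)
        (derivWithin (iteratedDerivWithin n f s) s z) s z := h1.hasDerivWithinAt
    rw [← iteratedDerivWithin_succ] at h2
    exact h2.mono hts
  have hconvt : Convex ℝ t := (convex_Icc a b).inter hconv
  have key := Convex.norm_image_sub_le_of_norm_hasDerivWithin_le (C := max M 0) hder
      (fun z hz => le_max_of_le_left (hM z hz)) hconvt hy hx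
  simpa [Real.norm_eq_abs] using key

lemma DD.of_succ {s : Set ℝ} (hs : UniqueDiffOn ℝ s) (hcs : IsClosed s)
    (hconv : Convex ℝ s) {n : ℕ} {f : ℝ → ℝ} (h : DD s (n + 1) f) : DD s n f :=
  ⟨h.1.of_le (by exact_mod_cast Nat.le_succ n),
    lipOn_iteratedDerivWithin hs hcs hconv h.1⟩

lemma DD.add {s : Set ℝ} (hs : UniqueDiffOn ℝ s) {n : ℕ} {f g : ℝ → ℝ}
    (hf : DD s n f) (hg : DD s n g) : DD s n (fun x => f x + g x) := by
  refine ⟨hf.1.add hg.1, ?_⟩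
  intro a b
  obtain ⟨Kf, hKf0, hKf⟩ := hf.2 a b
  obtain ⟨Kg, hKg0, hKg⟩ := hg.2 a b
  refine ⟨Kf + Kg, by positivity, fun x hx y hy => ?_⟩
  have ex : ∀ z ∈ Set.Icc a b ∩ s, iteratedDerivWithin n (fun x => f x + g x) s z
      = iteratedDerivWithin n f s z + iteratedDerivWithin n g s z := by
    intro z hz
    have : (fun x => f x + g x) = f + g := rfl
    rw [this]
    exact iteratedDerivWithin_add hz.2 hs (hf.1 z hz.2) (hg.1 z hz.2)
  rw [ex x hx, ex y hy]
  calc |iteratedDerivWithin n f s x + iteratedDerivWithin n g s x -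
      (iteratedDerivWithin n f s y + iteratedDerivWithin n g s y)|
      = |(iteratedDerivWithin n f s x - iteratedDerivWithin n f s y) +
        (iteratedDerivWithin n g s x - iteratedDerivWithin n g s y)| := by ring_nf
    _ ≤ |iteratedDerivWithin n f s x - iteratedDerivWithin n f s y| +
        |iteratedDerivWithin n g s x - iteratedDerivWithin n g s y| := abs_add_le _ _
    _ ≤ Kf * |x - y| + Kg * |x - y| := add_le_add (hKf x hx y hy) (hKg x hx y hy)
    _ = (Kf + Kg) * |x - y| := by ring

lemma DD.const_mul {s : Set ℝ} (hs : UniqueDiffOn ℝ s) {n : ℕ} {f : ℝ → ℝ}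
    (c : ℝ) (hf : DD s n f) : DD s n (fun x => c * f x) := by
  refine ⟨contDiffOn_const.mul hf.1, ?_⟩
  intro a b
  obtain ⟨K, hK0, hK⟩ := hf.2 a b
  refine ⟨|c| * K, by positivity, fun x hx y hy => ?_⟩
  rw [iteratedDerivWithin_const_mul hx.2 hs c (hf.1 x hx.2), iteratedDerivWithin_const_mul hy.2 hs c (hf.1 y hy.2),
    ← mul_sub, abs_mul, mul_assoc]
  exact mul_le_mul_of_nonneg_left (hK x hx y hy) (abs_nonneg c)

lemma DD.const {s : Set ℝ} (hs : UniqueDiffOn ℝ s) (n : ℕ) (c : ℝ) :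
    DD s n (fun _ => c) := by
  refine ⟨contDiffOn_const, ?_⟩
  intro a b
  refine ⟨0, le_rfl, fun x hx y hy => ?_⟩
  rcases n with _ | n
  · simp [iteratedDerivWithin_zero]
  · rw [iteratedDerivWithin_eq_iteratedFDerivWithin,
      iteratedFDerivWithin_const_of_ne (Nat.succ_ne_zero n),
      iteratedDerivWithin_eq_iteratedFDerivWithin,
      iteratedFDerivWithin_const_of_ne (Nat.succ_ne_zero n)]
    · simp
    all_goals first | exact hs | exact hx.2 | exact hy.2

lemma DD.sum {s : Set ℝ} (hs : UniqueDiffOn ℝ s) {n : ℕ} {ι : Type*}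
    (S : Finset ι) (f : ι → ℝ → ℝ) (h : ∀ i ∈ S, DD s n (f i)) :
    DD s n (fun x => ∑ i ∈ S, f i x) := by
  classical
  induction S using Finset.induction_on with
  | empty => simpa using DD.const hs n 0
  | insert a S' hnot ih =>
    have : (fun x => ∑ i ∈ insert a S', f i x) = fun x => f a x + ∑ i ∈ S', f i x := by
      funext x; rw [Finset.sum_insert hnot]
    rw [this]
    exact DD.add hs (h a (Finset.mem_insert_self a S'))
      (ih fun i hi => h i (Finset.mem_insert_of_mem hi))

lemma DD.mul {s : Set ℝ} (hs : UniqueDiffOn ℝ s) (hcs : IsClosed s)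
    (hconv : Convex ℝ s) : ∀ {n : ℕ} {f g : ℝ → ℝ},
    DD s n f → DD s n g → DD s n (fun x => f x * g x) := by
  intro n
  induction n with
  | zero =>
    intro f g hf hg
    refine ⟨hf.1.mul hg.1, ?_⟩
    intro a b
    have htc : IsCompact (Set.Icc a b ∩ s) := isCompact_Icc.inter_right hcs
    obtain ⟨Mf, hMf⟩ := htc.exists_bound_of_continuousOn
      ((contDiffOn_zero.mp hf.1).mono Set.inter_subset_right)
    obtain ⟨Mg, hMg⟩ := htc.exists_bound_of_continuousOn
      ((contDiffOn_zero.mp hg.1).mono Set.inter_subset_right)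
    obtain ⟨Kf, hKf0, hKf⟩ := hf.2 a b
    obtain ⟨Kg, hKg0, hKg⟩ := hg.2 a b
    refine ⟨max Mf 0 * Kg + max Mg 0 * Kf, by positivity, fun x hx y hy => ?_⟩
    simp only [iteratedDerivWithin_zero] at hKf hKg ⊢
    have h1 : |f x * g x - f y * g y| ≤ |f x| * |g x - g y| + |g y| * |f x - f y| := by
      have : f x * g x - f y * g y = f x * (g x - g y) + g y * (f x - f y) := by ring
      rw [this]
      refine (abs_add_le _ _).trans ?_
      rw [abs_mul, abs_mul]
    refine h1.trans ?_
    have h2 : |f x| * |g x - g y| ≤ max Mf 0 * (Kg * |x - y|) := by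
      refine mul_le_mul (le_max_of_le_left ?_) (hKg x hx y hy) (abs_nonneg _) (le_max_right _ _)
      simpa [Real.norm_eq_abs] using hMf x hx
    have h3 : |g y| * |f x - f y| ≤ max Mg 0 * (Kf * |x - y|) := by
      refine mul_le_mul (le_max_of_le_left ?_) (hKf x hx y hy) (abs_nonneg _) (le_max_right _ _)
      simpa [Real.norm_eq_abs] using hMg y hy
    calc |f x| * |g x - g y| + |g y| * |f x - f y|
        ≤ max Mf 0 * (Kg * |x - y|) + max Mg 0 * (Kf * |x - y|) := add_le_add h2 h3
      _ = (max Mf 0 * Kg + max Mg 0 * Kf) * |x - y| := by ring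
  | succ n IH =>
    intro f g hf hg
    have h1n : (1 : WithTop ℕ∞) ≤ ((n : ℕ) + 1 : ℕ) := by
      exact_mod_cast Nat.succ_le_succ (Nat.zero_le n)
    have hf' : DD s n (derivWithin f s) :=
      ⟨hf.1.derivWithin hs (by exact_mod_cast le_rfl),
        LipOn.congr (fun z hz => by rw [iteratedDerivWithin_succ']) hf.2⟩
    have hg' : DD s n (derivWithin g s) :=
      ⟨hg.1.derivWithin hs (by exact_mod_cast le_rfl),
        LipOn.congr (fun z hz => by rw [iteratedDerivWithin_succ']) hg.2⟩
    have hfn : DD s n f := DD.of_succ hs hcs hconv hf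
    have hgn : DD s n g := DD.of_succ hs hcs hconv hg
    have hprod : DD s n (fun x => derivWithin f s x * g x + f x * derivWithin g s x) :=
      DD.add hs (IH hf' hgn) (IH hfn hg')
    refine ⟨hf.1.mul hg.1, ?_⟩
    have heq : ∀ z ∈ s, iteratedDerivWithin (n + 1) (fun x => f x * g x) s z
        = iteratedDerivWithin n
          (fun x => derivWithin f s x * g x + f x * derivWithin g s x) s z := by
      intro z hz
      rw [iteratedDerivWithin_succ']
      refine iteratedDerivWithin_congr ?_ hz
      intro y hy
      exact derivWithin_mul
        (hf.1.differentiableOn (by simp) y hy) (hg.1.differentiableOn (by simp) y hy)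
    exact LipOn.congr (fun z hz => (heq z hz).symm) hprod.2

lemma DD.comp {s : Set ℝ} (hs : UniqueDiffOn ℝ s) (hcs : IsClosed s)
    (hconv : Convex ℝ s) : ∀ {n : ℕ} {g w : ℝ → ℝ},
    DD Set.univ n g → DD s n w → DD s n (fun x => g (w x)) := by
  intro n
  induction n with
  | zero =>
    intro g w hg hw
    refine ⟨(contDiffOn_univ.mp hg.1).comp_contDiffOn hw.1, ?_⟩
    intro a b
    have htc : IsCompact (Set.Icc a b ∩ s) := isCompact_Icc.inter_right hcs
    obtain ⟨M, hM⟩ := htc.exists_bound_of_continuousOn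
      ((contDiffOn_zero.mp hw.1).mono Set.inter_subset_right)
    obtain ⟨Kg, hKg0, hKg⟩ := hg.2 (-M) M
    obtain ⟨Kw, hKw0, hKw⟩ := hw.2 a b
    refine ⟨Kg * Kw, by positivity, fun x hx y hy => ?_⟩
    simp only [iteratedDerivWithin_zero] at hKg hKw ⊢
    have hmem : ∀ z ∈ Set.Icc a b ∩ s, w z ∈ Set.Icc (-M) M ∩ Set.univ := by
      intro z hz
      have := hM z hz
      rw [Real.norm_eq_abs] at this
      exact ⟨abs_le.mp this, Set.mem_univ _⟩
    calc |g (w x) - g (w y)| ≤ Kg * |w x - w y| := hKg _ (hmem x hx) _ (hmem y hy)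
      _ ≤ Kg * (Kw * |x - y|) := mul_le_mul_of_nonneg_left (hKw x hx y hy) hKg0
      _ = Kg * Kw * |x - y| := by ring
  | succ n IH =>
    intro g w hg hw
    have h1n : (1 : WithTop ℕ∞) ≤ ((n : ℕ) + 1 : ℕ) := by
      exact_mod_cast Nat.succ_le_succ (Nat.zero_le n)
    have hgC : ContDiff ℝ ((n : ℕ) + 1 : ℕ) g := contDiffOn_univ.mp hg.1
    have hgC' : ContDiff ℝ ((n : WithTop ℕ∞) + 1) g := by exact_mod_cast hgC
    have hg' : DD Set.univ n (deriv g) := by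
      refine ⟨contDiffOn_univ.mpr (contDiff_succ_iff_deriv.mp hgC').2.2, ?_⟩
      have hE : ∀ z ∈ Set.univ, iteratedDerivWithin (n + 1) g Set.univ z
          = iteratedDerivWithin n (deriv g) Set.univ z := by
        intro z _
        rw [iteratedDerivWithin_univ, iteratedDerivWithin_univ, ← iteratedDeriv_succ']
      exact LipOn.congr hE hg.2
    have hw' : DD s n (derivWithin w s) :=
      ⟨hw.1.derivWithin hs (by exact_mod_cast le_rfl),
        LipOn.congr (fun z hz => by rw [iteratedDerivWithin_succ']) hw.2⟩
    have hwn : DD s n w := DD.of_succ hs hcs hconv hw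
    have hcomp : DD s n (fun x => deriv g (w x)) := IH hg' hwn
    have hprod : DD s n (fun x => deriv g (w x) * derivWithin w s x) :=
      DD.mul hs hcs hconv hcomp hw'
    refine ⟨hgC.comp_contDiffOn hw.1, ?_⟩
    have heq : ∀ z ∈ s, iteratedDerivWithin (n + 1) (fun x => g (w x)) s z
        = iteratedDerivWithin n (fun x => deriv g (w x) * derivWithin w s x) s z := by
      intro z hz
      rw [iteratedDerivWithin_succ']
      refine iteratedDerivWithin_congr ?_ hz
      intro y hy
      have hdg : HasDerivAt g (deriv g (w y)) (w y) :=
        ((hgC.differentiable (by simp)) (w y)).hasDerivAt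
      have hdw : HasDerivWithinAt w (derivWithin w s y) s y :=
        (hw.1.differentiableOn (by simp) y hy).hasDerivWithinAt
      exact (hdg.comp_hasDerivWithinAt y hdw).derivWithin (hs.uniqueDiffWithinAt hy)
    exact LipOn.congr (fun z hz => (heq z hz).symm) hprod.2

open Filter in
lemma hasDerivAt_absPowMul (j : ℕ) (x : ℝ) :
    HasDerivAt (fun y : ℝ => |y| ^ (j + 1) * y) (((j : ℝ) + 2) * |x| ^ (j + 1)) x := by
  rcases lt_trichotomy x 0 with hx | hx | hx
  · have hev : (fun y : ℝ => |y| ^ (j + 1) * y) =ᶠ[nhds x]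
        fun y : ℝ => (-1 : ℝ) ^ (j + 1) * y ^ (j + 2) := by
      filter_upwards [Iio_mem_nhds hx] with y hy
      rw [abs_of_neg hy, neg_pow]
      ring
    have hbase : HasDerivAt (fun y : ℝ => (-1 : ℝ) ^ (j + 1) * y ^ (j + 2))
        ((-1 : ℝ) ^ (j + 1) * (((j : ℝ) + 2) * x ^ (j + 1))) x := by
      have := (hasDerivAt_pow (j + 2) x).const_mul ((-1 : ℝ) ^ (j + 1))
      refine this.congr_deriv ?_
      push_cast
      ring_nf
    have := hbase.congr_of_eventuallyEq hev
    refine this.congr_deriv ?_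
    rw [abs_of_neg hx, neg_pow]
    ring
  · subst hx
    rw [hasDerivAt_iff_tendsto_slope]
    have h0 : ((j : ℝ) + 2) * |(0:ℝ)| ^ (j + 1) = 0 := by
      simp [zero_pow (Nat.succ_ne_zero j)]
    rw [h0]
    have htend : Tendsto (fun y : ℝ => |y| ^ (j + 1)) (nhdsWithin 0 {(0:ℝ)}ᶜ) (nhds 0) := by
      have h1 : Tendsto (fun y : ℝ => |y| ^ (j + 1)) (nhds 0) (nhds (|(0:ℝ)| ^ (j + 1))) :=
        (continuous_abs.pow (j + 1)).tendsto 0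
      simp only [abs_zero, zero_pow (Nat.succ_ne_zero j)] at h1
      exact h1.mono_left nhdsWithin_le_nhds
    refine htend.congr' ?_
    filter_upwards [self_mem_nhdsWithin] with y hy
    have hy0 : (y : ℝ) ≠ 0 := hy
    simp only [slope_def_field]
    field_simp
    simp
  · have hev : (fun y : ℝ => |y| ^ (j + 1) * y) =ᶠ[nhds x] fun y : ℝ => y ^ (j + 2) := by
      filter_upwards [Ioi_mem_nhds hx] with y hy
      rw [abs_of_pos hy]
      ring
    have := (hasDerivAt_pow (j + 2) x).congr_of_eventuallyEq hev
    refine this.congr_deriv ?_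
    rw [abs_of_pos hx]
    push_cast
    ring_nf

open Filter in
lemma hasDerivAt_absPow (j : ℕ) (x : ℝ) :
    HasDerivAt (fun y : ℝ => |y| ^ (j + 2)) (((j : ℝ) + 2) * (|x| ^ j * x)) x := by
  rcases lt_trichotomy x 0 with hx | hx | hx
  · have hev : (fun y : ℝ => |y| ^ (j + 2)) =ᶠ[nhds x]
        fun y : ℝ => (-1 : ℝ) ^ (j + 2) * y ^ (j + 2) := by
      filter_upwards [Iio_mem_nhds hx] with y hy
      rw [abs_of_neg hy, neg_pow]
    have hbase : HasDerivAt (fun y : ℝ => (-1 : ℝ) ^ (j + 2) * y ^ (j + 2))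
        ((-1 : ℝ) ^ (j + 2) * (((j : ℝ) + 2) * x ^ (j + 1))) x := by
      have := (hasDerivAt_pow (j + 2) x).const_mul ((-1 : ℝ) ^ (j + 2))
      refine this.congr_deriv ?_
      push_cast
      ring_nf
    have := hbase.congr_of_eventuallyEq hev
    refine this.congr_deriv ?_
    rw [abs_of_neg hx, neg_pow]
    ring
  · subst hx
    rw [hasDerivAt_iff_tendsto_slope]
    have h0 : ((j : ℝ) + 2) * (|(0:ℝ)| ^ j * 0) = 0 := by ring
    rw [h0]
    have htend : Tendsto (fun y : ℝ => |y| ^ j * y) (nhdsWithin 0 {(0:ℝ)}ᶜ) (nhds 0) := by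
      have h1 : Tendsto (fun y : ℝ => |y| ^ j * y) (nhds 0) (nhds (|(0:ℝ)| ^ j * 0)) :=
        ((continuous_abs.pow j).mul continuous_id).tendsto 0
      simp only [mul_zero] at h1
      exact h1.mono_left nhdsWithin_le_nhds
    refine htend.congr' ?_
    filter_upwards [self_mem_nhdsWithin] with y hy
    have hy0 : (y : ℝ) ≠ 0 := hy
    simp only [slope_def_field]
    rw [abs_zero, zero_pow (by omega : j + 2 ≠ 0), sub_zero, sub_zero]
    rw [eq_div_iff hy0]
    have : |y| ^ (j + 2) = |y| ^ j * y ^ 2 := by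
      rw [pow_add, sq_abs]
    rw [this]
    ring
  · have hev : (fun y : ℝ => |y| ^ (j + 2)) =ᶠ[nhds x] fun y : ℝ => y ^ (j + 2) := by
      filter_upwards [Ioi_mem_nhds hx] with y hy
      rw [abs_of_pos hy]
    have := (hasDerivAt_pow (j + 2) x).congr_of_eventuallyEq hev
    refine this.congr_deriv ?_
    rw [abs_of_pos hx]
    push_cast
    ring_nf

lemma goodA : ∀ i : ℕ, ContDiff ℝ ((2*i+1 : ℕ) : WithTop ℕ∞) (fun x : ℝ => |x| ^ (2*i+1) * x) ∧
    ∃ c : ℝ, iteratedDeriv (2*i+1) (fun x : ℝ => |x| ^ (2*i+1) * x) = fun x => c * |x| := by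
  intro i
  induction i with
  | zero =>
    constructor
    · rw [show ((2*0+1 : ℕ) : WithTop ℕ∞) = 1 by norm_num]
      rw [contDiff_one_iff_deriv]
      constructor
      · intro x
        exact (hasDerivAt_absPowMul 0 x).differentiableAt
      · have hd : deriv (fun x : ℝ => |x| ^ (2*0+1) * x) = fun x : ℝ => 2 * |x| := by
          funext x
          have h := (hasDerivAt_absPowMul 0 x).deriv
          simpa using h
        rw [hd]
        exact continuous_const.mul continuous_abs
    · refine ⟨2, ?_⟩
      funext x
      rw [show (2*0+1 : ℕ) = 0+1 from rfl, iteratedDeriv_succ', iteratedDeriv_zero]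
      have h := (hasDerivAt_absPowMul 0 x).deriv
      simpa using h
  | succ i IH =>
    obtain ⟨IH1, c, IH2⟩ := IH
    set m := 2*i+1 with hm
    have hexp : 2*(i+1)+1 = m+2 := by omega
    rw [hexp]
    have hd1 : deriv (fun x : ℝ => |x| ^ (m+2) * x) = fun x : ℝ => ((m:ℝ)+3) * |x| ^ (m+2) := by
      funext x
      have h := (hasDerivAt_absPowMul (m+1) x).deriv
      rw [show ((m:ℝ)+3) = ((m+1 : ℕ):ℝ)+2 by push_cast; ring]
      exact h
    have hd2 : deriv (fun x : ℝ => |x| ^ (m+2)) = fun x : ℝ => ((m:ℝ)+2) * (|x| ^ m * x) := by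
      funext x
      exact (hasDerivAt_absPow m x).deriv
    have hdiff1 : Differentiable ℝ (fun x : ℝ => |x| ^ (m+2) * x) :=
      fun x => (hasDerivAt_absPowMul (m+1) x).differentiableAt
    have hdiff2 : Differentiable ℝ (fun x : ℝ => |x| ^ (m+2)) :=
      fun x => (hasDerivAt_absPow m x).differentiableAt
    have hC2 : ContDiff ℝ ((m : WithTop ℕ∞) + 1) (fun x : ℝ => |x| ^ (m+2)) := by
      rw [contDiff_succ_iff_deriv]
      refine ⟨hdiff2, by simp, ?_⟩
      rw [hd2]
      exact contDiff_const.mul IH1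
    constructor
    · rw [show ((m+2 : ℕ) : WithTop ℕ∞) = ((m : WithTop ℕ∞) + 1) + 1 by push_cast; ring]
      rw [contDiff_succ_iff_deriv]
      refine ⟨hdiff1, by simp, ?_⟩
      rw [hd1]
      exact contDiff_const.mul hC2
    · refine ⟨((m:ℝ)+3) * (((m:ℝ)+2) * c), ?_⟩
      have hdd : deriv (deriv (fun x : ℝ => |x| ^ (m+2) * x))
          = fun x : ℝ => ((m:ℝ)+3) * (((m:ℝ)+2) * (|x| ^ m * x)) := by
        rw [hd1]
        funext x
        exact ((hasDerivAt_absPow m x).const_mul ((m:ℝ)+3)).deriv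
      funext x
      rw [show m+2 = m+1+1 from rfl, iteratedDeriv_succ', iteratedDeriv_succ', hdd]
      have hinner2 : ContDiffOn ℝ m (fun x : ℝ => |x| ^ m * x) Set.univ := IH1.contDiffOn
      have hinner : ContDiffOn ℝ m (fun x : ℝ => ((m:ℝ)+2) * (|x| ^ m * x)) Set.univ :=
        (contDiff_const.mul IH1).contDiffOn
      rw [← iteratedDerivWithin_univ,
        iteratedDerivWithin_const_mul (Set.mem_univ x) uniqueDiffOn_univ _ (hinner x (Set.mem_univ x)),
        iteratedDerivWithin_const_mul (Set.mem_univ x) uniqueDiffOn_univ _ (hinner2 x (Set.mem_univ x)),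
        iteratedDerivWithin_univ, IH2]
      ring

lemma goodA_DD {m : ℕ} (hm : Odd m) : DD Set.univ m (fun x : ℝ => |x| ^ m * x) := by
  obtain ⟨i, hi⟩ := hm
  have hmi : m = 2*i+1 := by omega
  subst hmi
  obtain ⟨hC, c, hit⟩ := goodA i
  refine ⟨contDiffOn_univ.mpr hC, ?_⟩
  intro a b
  refine ⟨|c|, abs_nonneg c, fun x hx y hy => ?_⟩
  rw [iteratedDerivWithin_univ, hit, ← mul_sub, abs_mul]
  exact mul_le_mul_of_nonneg_left (abs_abs_sub_abs_le_abs_sub x y) (abs_nonneg c)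

end Stmt7Aux

/-- pointwise time regularity, `p` odd.
Let `(V,μ,ν)` be a weighted graph with all nodes having finitely many neighbours, and
`p ≥ 3` an odd integer. If `u` solves `∂_t u(t,v) = −L_p u(t,v)` pointwise on `[0,∞)`,
then for every `v` the map `t ↦ u(t,v)` is `C^{p−1}` on `[0,∞)` and its `(p−1)`-st
derivative is Lipschitz on every compact subinterval of `[0,∞)`. -/
theorem stmt7 {V : Type*} [Countable V]
    (μ : V → V → ℝ) (ν : V → ℝ)
    (hμsymm : ∀ v w, μ v w = μ w v) (hμnn : ∀ v w, 0 ≤ μ v w) (hμdiag : ∀ v, μ v v = 0)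
    (hν : ∀ v, 0 < ν v)
    (hfin : ∀ v, {w | μ v w ≠ 0}.Finite)
    (p : ℕ) (hpodd : Odd p) (hp3 : 3 ≤ p)
    (u : ℝ → V → ℝ)
    (hder : ∀ v, ∀ t, 0 ≤ t →
      HasDerivWithinAt (fun s => u s v) (-(pLap μ ν (p : ℝ) (u t) v)) (Set.Ici 0) t) :
    ∀ v, ContDiffOn ℝ (p - 1 : ℕ) (fun t => u t v) (Set.Ici 0) ∧
      ∀ a b : ℝ, 0 ≤ a → a ≤ b → ∃ K : ℝ,
        ∀ x ∈ Set.Icc a b, ∀ y ∈ Set.Icc a b,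
          |iteratedDerivWithin (p - 1) (fun t => u t v) (Set.Ici 0) x -
            iteratedDerivWithin (p - 1) (fun t => u t v) (Set.Ici 0) y| ≤ K * |x - y| := by
  classical
  have hUD : UniqueDiffOn ℝ (Set.Ici (0:ℝ)) := uniqueDiffOn_Ici 0
  have hCL : IsClosed (Set.Ici (0:ℝ)) := isClosed_Ici
  have hCV : Convex ℝ (Set.Ici (0:ℝ)) := convex_Ici 0
  set m : ℕ := p - 2 with hmdef
  have hmodd : Odd m := by
    have hp := Nat.odd_iff.mp hpodd
    rw [Nat.odd_iff]
    omega
  have hDDA : Stmt7Aux.DD Set.univ m (fun x : ℝ => |x| ^ m * x) := Stmt7Aux.goodA_DD hmodd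
  have hA : ContDiff ℝ (m : ℕ) (fun x : ℝ => |x| ^ m * x) := contDiffOn_univ.mp hDDA.1
  -- rewrite of pLap as a finite sum
  have hplap : ∀ v : V, ∀ f : V → ℝ, pLap μ ν p f v
      = (1 / ν v) * ∑ w ∈ (hfin v).toFinset, μ v w * (|f v - f w| ^ m * (f v - f w)) := by
    intro v f
    unfold pLap
    congr 1
    have hside : ∀ w ∉ (hfin v).toFinset,
        μ v w * |f v - f w| ^ ((p:ℝ) - 2) * (f v - f w) = 0 := by
      intro w hw
      have h0 : μ v w = 0 := by
        by_contra h
        exact hw ((hfin v).mem_toFinset.mpr h)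
      simp [h0]
    rw [tsum_eq_sum hside]
    refine Finset.sum_congr rfl fun w _ => ?_
    rw [show ((p:ℝ) - 2) = ((m : ℕ) : ℝ) by
        rw [hmdef, Nat.cast_sub (by omega : 2 ≤ p)]; norm_num,
      Real.rpow_natCast, mul_assoc]
  -- the time derivative equals the explicit finite-sum formula
  have hEqd : ∀ v : V, Set.EqOn (derivWithin (fun t => u t v) (Set.Ici 0))
      (fun t => -(1 / ν v) * ∑ w ∈ (hfin v).toFinset,
        μ v w * (|u t v - u t w| ^ m * (u t v - u t w))) (Set.Ici 0) := by
    intro v t ht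
    rw [(hder v t ht).derivWithin (hUD.uniqueDiffWithinAt ht), hplap v (u t)]
    ring
  -- bootstrap smoothness
  have key : ∀ k : ℕ, k ≤ p - 1 → ∀ v, ContDiffOn ℝ (k : ℕ) (fun t => u t v) (Set.Ici 0) := by
    intro k
    induction k with
    | zero =>
      intro _ v
      have : ContinuousOn (fun t => u t v) (Set.Ici 0) :=
        fun t ht => (hder v t ht).continuousWithinAt
      exact_mod_cast contDiffOn_zero.mpr this
    | succ k IH =>
      intro hk v
      rw [show (((k+1 : ℕ)) : WithTop ℕ∞) = ((k : ℕ) : WithTop ℕ∞) + 1 by push_cast; ring]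
      rw [contDiffOn_succ_iff_derivWithin hUD]
      refine ⟨fun t ht => (hder v t ht).differentiableWithinAt, by simp, ?_⟩
      refine ContDiffOn.congr ?_ (hEqd v)
      refine contDiffOn_const.mul (ContDiffOn.sum fun w _ => ?_)
      refine contDiffOn_const.mul ?_
      have hk' : ((k : ℕ) : WithTop ℕ∞) ≤ (m : ℕ) := by
        have : k ≤ m := by omega
        exact_mod_cast this
      exact (hA.of_le hk').comp_contDiffOn ((IH (by omega) v).sub (IH (by omega) w))
  intro v
  have hC : ContDiffOn ℝ ((p - 1 : ℕ)) (fun t => u t v) (Set.Ici 0) := key (p-1) le_rfl v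
  refine ⟨hC, ?_⟩
  have hDDF : Stmt7Aux.DD (Set.Ici (0:ℝ)) m (fun t => -(1 / ν v) * ∑ w ∈ (hfin v).toFinset,
      μ v w * (|u t v - u t w| ^ m * (u t v - u t w))) := by
    apply Stmt7Aux.DD.const_mul hUD
    apply Stmt7Aux.DD.sum hUD
    intro w _
    apply Stmt7Aux.DD.const_mul hUD
    have hΔC : ContDiffOn ℝ ((m + 1 : ℕ)) (fun t => u t v - u t w) (Set.Ici 0) := by
      rw [show m + 1 = p - 1 from by omega]
      exact (key (p-1) le_rfl v).sub (key (p-1) le_rfl w)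
    have hΔ : Stmt7Aux.DD (Set.Ici (0:ℝ)) m (fun t => u t v - u t w) :=
      ⟨hΔC.of_le (by exact_mod_cast Nat.le_succ m),
        Stmt7Aux.lipOn_iteratedDerivWithin hUD hCL hCV (by exact_mod_cast hΔC)⟩
    exact Stmt7Aux.DD.comp hUD hCL hCV hDDA hΔ
  obtain ⟨hF1, hF2⟩ := hDDF
  intro a b ha hab
  obtain ⟨K, hK0, hK⟩ := hF2 a b
  refine ⟨K, fun x hx y hy => ?_⟩
  have hx' : x ∈ Set.Icc a b ∩ Set.Ici 0 := ⟨hx, le_trans ha hx.1⟩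
  have hy' : y ∈ Set.Icc a b ∩ Set.Ici 0 := ⟨hy, le_trans ha hy.1⟩
  have hrw : ∀ z ∈ Set.Icc a b ∩ Set.Ici (0:ℝ),
      iteratedDerivWithin (p - 1) (fun t => u t v) (Set.Ici 0) z
      = iteratedDerivWithin m (fun t => -(1 / ν v) * ∑ w ∈ (hfin v).toFinset,
          μ v w * (|u t v - u t w| ^ m * (u t v - u t w))) (Set.Ici 0) z := by
    intro z hz
    rw [show p - 1 = m + 1 from by omega, iteratedDerivWithin_succ']
    exact iteratedDerivWithin_congr (hEqd v) hz.2
  rw [hrw x hx', hrw y hy']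
  exact hK x hx' y hy'
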